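/- Let n > 1, let i be a positive integer, and let α ∈ F_{2^n} satisfy tr(α + 1) = 0 (equivalently, tr(α) = 0 when n is even, and tr(α) = 1 when n is odd). Then h_α(x) = x + tr(αx + x^{2^i+1}) is an involution on F_{2^n}, i.e., h_α(h_α(x)) = x for all x ∈ F_{2^n}. -/
import Mathlib


/-- The absolute trace from `F_{2^n}` to its prime field, computed inside the field. -/
noncomputable def aTr {K : Type} [CommRing K] (n : ℕ) (x : K) : K :=
  ∑ k ∈ Finset.range n, x ^ 2 ^ k

section Aux

variable {n : ℕ}

lemma aTr_add' (a b : GaloisField 2 n) : aTr n (a + b) = aTr n a + aTr n b := by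
  unfold aTr
  rw [← Finset.sum_add_distrib]
  exact Finset.sum_congr rfl fun k _ => add_pow_char_pow a b 2 k

lemma pow_two_pow_n (hn : n ≠ 0) (x : GaloisField 2 n) : x ^ 2 ^ n = x := by
  haveI : Fintype (GaloisField 2 n) := Fintype.ofFinite _
  rw [← GaloisField.card 2 n hn, Nat.card_eq_fintype_card]
  exact FiniteField.pow_card x

lemma aTr_sq (hn : n ≠ 0) (x : GaloisField 2 n) : aTr n (x ^ 2) = aTr n x := by
  unfold aTr
  have h1 : ∀ k, (x ^ 2) ^ 2 ^ k = x ^ 2 ^ (k + 1) := by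
    intro k
    rw [← pow_mul, pow_succ, mul_comm]
  have key : (∑ k ∈ Finset.range n, (x ^ 2) ^ 2 ^ k) + x ^ 2 ^ 0
      = (∑ k ∈ Finset.range n, x ^ 2 ^ k) + x ^ 2 ^ n := by
    have h := Finset.sum_range_succ' (fun k => x ^ 2 ^ k) n
    rw [Finset.sum_range_succ (fun k => x ^ 2 ^ k) n] at h
    calc (∑ k ∈ Finset.range n, (x ^ 2) ^ 2 ^ k) + x ^ 2 ^ 0
        = (∑ k ∈ Finset.range n, x ^ 2 ^ (k + 1)) + x ^ 2 ^ 0 := by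
          simp only [h1]
      _ = (∑ k ∈ Finset.range n, x ^ 2 ^ k) + x ^ 2 ^ n := by rw [← h]
  have hx : x ^ 2 ^ n = x ^ 2 ^ 0 := by
    rw [pow_two_pow_n hn, pow_zero, pow_one]
  rw [hx] at key
  exact add_right_cancel key

lemma aTr_pow2 (hn : n ≠ 0) (i : ℕ) (x : GaloisField 2 n) :
    aTr n (x ^ 2 ^ i) = aTr n x := by
  induction i with
  | zero => simp
  | succ k ih =>
    have h : x ^ 2 ^ (k + 1) = (x ^ 2 ^ k) ^ 2 := by
      rw [← pow_mul, pow_succ]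
    rw [h, aTr_sq hn, ih]

lemma aTr_idem (hn : n ≠ 0) (y : GaloisField 2 n) :
    aTr n y ^ 2 = aTr n y := by
  have h : aTr n y ^ 2 = aTr n (y ^ 2) := by
    unfold aTr
    rw [sum_pow_char]
    exact Finset.sum_congr rfl fun k _ => by rw [← pow_mul, ← pow_mul, mul_comm]
  rw [h, aTr_sq hn]

lemma aTr_zero_or_one (hn : n ≠ 0) (y : GaloisField 2 n) :
    aTr n y = 0 ∨ aTr n y = 1 := by
  have h := aTr_idem hn y
  have h0 : aTr n y * (aTr n y - 1) = 0 := by linear_combination h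
  rcases mul_eq_zero.mp h0 with h1 | h1
  · exact Or.inl h1
  · exact Or.inr (sub_eq_zero.mp h1)

end Aux

/-- for `n > 1` and `α ∈ F_{2^n}` with `tr(α+1) = 0`, the map
`h_α(x) = x + tr(αx + x^{2^i+1})` is an involution on `F_{2^n}`. -/
theorem stmt17 (n i : ℕ) (hn : 1 < n) (hi : 0 < i)
    (α : GaloisField 2 n) (hα : aTr n (α + 1) = 0) :
    ∀ x : GaloisField 2 n,
      ((x + aTr n (α * x + x ^ (2 ^ i + 1))) +
        aTr n (α * (x + aTr n (α * x + x ^ (2 ^ i + 1))) +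
          (x + aTr n (α * x + x ^ (2 ^ i + 1))) ^ (2 ^ i + 1))) = x := by
  intro x
  have hn' : n ≠ 0 := by omega
  have char2 : (2 : GaloisField 2 n) = 0 := by
    exact_mod_cast CharP.cast_eq_zero (GaloisField 2 n) 2
  rcases aTr_zero_or_one hn' (α * x + x ^ (2 ^ i + 1)) with ht | ht
  · rw [ht, add_zero, ht, add_zero]
  · rw [ht]
    have h1 : (x + 1) ^ (2 ^ i + 1) = (x ^ 2 ^ i + 1) * (x + 1) := by
      rw [pow_succ, add_pow_char_pow, one_pow]
    have key : α * (x + 1) + (x + 1) ^ (2 ^ i + 1)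
        = (α * x + x ^ (2 ^ i + 1)) + ((α + 1) + (x ^ 2 ^ i + x)) := by
      rw [h1, pow_succ]; ring
    rw [key, aTr_add', ht, aTr_add', hα, aTr_add', aTr_pow2 hn']
    linear_combination (1 + aTr n x) * char2
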